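/- Let f: ℝ^{2d}\{0} → ℝ be differentiable with level set M = {f = 1}, and suppose M is strictly convex in the sense that for all p, q ∈ M with p ≠ q one has ⟨q − p, ∇f(q)⟩ > 0. If q₁, q₂ ∈ M and t₁, t₂ > 0 satisfy q₁ + t₁·J∇f(q₁) = q₂ + t₂·J∇f(q₂), then q₁ = q₂ (and hence t₁ = t₂ provided J∇f(q₁) ≠ 0). In other words, through each point exterior to M there passes at most one positive characteristic ray of M. -/
import Mathlib


open scoped RealInnerProductSpace

/-- Let `f : ℝ^{2d}\{0} → ℝ` be differentiable with level set
`M = {f = 1}`, and suppose `M` is strictly convex in the sense that for all `p, q ∈ M`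
with `p ≠ q` one has `⟪q − p, ∇f(q)⟫ > 0`.  If `q₁, q₂ ∈ M` and `t₁, t₂ > 0` satisfy
`q₁ + t₁ • J ∇f(q₁) = q₂ + t₂ • J ∇f(q₂)`, then `q₁ = q₂` (and hence `t₁ = t₂` provided
`J ∇f(q₁) ≠ 0`): through each point exterior to `M` there passes at most one positive
characteristic ray of `M`. -/
theorem stmt16 {d : ℕ}
    (J : EuclideanSpace ℝ (Fin (2 * d)) →ₗᵢ[ℝ] EuclideanSpace ℝ (Fin (2 * d)))
    (hJ : ∀ v, J (J v) = -v)
    (f : EuclideanSpace ℝ (Fin (2 * d)) → ℝ)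
    (hf : ∀ x : EuclideanSpace ℝ (Fin (2 * d)), x ≠ 0 → DifferentiableAt ℝ f x)
    (hconv : ∀ p q : EuclideanSpace ℝ (Fin (2 * d)), f p = 1 → f q = 1 → p ≠ q →
      0 < ⟪q - p, gradient f q⟫)
    (q₁ q₂ : EuclideanSpace ℝ (Fin (2 * d))) (t₁ t₂ : ℝ)
    (hq₁ : f q₁ = 1) (hq₂ : f q₂ = 1) (ht₁ : 0 < t₁) (ht₂ : 0 < t₂)
    (h : q₁ + t₁ • J (gradient f q₁) = q₂ + t₂ • J (gradient f q₂)) :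
    q₁ = q₂ ∧ (J (gradient f q₁) ≠ 0 → t₁ = t₂) := by

  set g₁ := gradient f q₁ with hg₁
  set g₂ := gradient f q₂ with hg₂
  have skew : ∀ u v, ⟪(J u : EuclideanSpace ℝ (Fin (2 * d))), v⟫ = -⟪u, J v⟫ := by
    intro u v
    have h1 : ⟪(J u : EuclideanSpace ℝ (Fin (2 * d))), J (J v)⟫ = ⟪u, J v⟫ :=
      J.inner_map_map u (J v)
    rw [hJ, inner_neg_right] at h1
    linarith
  have hzero : ∀ u, ⟪(J u : EuclideanSpace ℝ (Fin (2 * d))), u⟫ = 0 := by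
    intro u
    have := skew u u
    have h2 : ⟪u, (J u : EuclideanSpace ℝ (Fin (2 * d)))⟫ = ⟪(J u : EuclideanSpace ℝ (Fin (2 * d))), u⟫ := real_inner_comm _ _
    linarith
  have hqeq : q₁ = q₂ := by
    by_contra hne
    have h1 := hconv q₁ q₂ hq₁ hq₂ hne
    have h2 := hconv q₂ q₁ hq₂ hq₁ (Ne.symm hne)
    have hd : q₂ - q₁ = t₁ • J g₁ - t₂ • J g₂ := by
      have : q₂ + t₂ • J g₂ = q₁ + t₁ • J g₁ := h.symm
      rw [sub_eq_sub_iff_add_eq_add]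
      rw [this]; abel
    have hd' : q₁ - q₂ = t₂ • J g₂ - t₁ • J g₁ := by
      rw [← neg_sub, hd]; abel
    rw [hd, inner_sub_left, real_inner_smul_left, real_inner_smul_left, hzero] at h1
    rw [hd', inner_sub_left, real_inner_smul_left, real_inner_smul_left, hzero] at h2
    have hs : ⟪(J g₂ : EuclideanSpace ℝ (Fin (2 * d))), g₁⟫ = -⟪(J g₁ : EuclideanSpace ℝ (Fin (2 * d))), g₂⟫ := by
      rw [skew, real_inner_comm]
    rw [hs] at h2
    nlinarith
  refine ⟨hqeq, fun hv => ?_⟩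
  subst hqeq
  have : (t₁ - t₂) • (J g₁ : EuclideanSpace ℝ (Fin (2 * d))) = 0 := by
    rw [sub_smul, sub_eq_zero]
    exact add_left_cancel h
  rcases smul_eq_zero.mp this with h' | h'
  · linarith [sub_eq_zero.mp h']
  · exact absurd h' hv
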